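/- Let d ≥ 1, let p : [0,1] × ℝᵈ → ℝ_{>0} be a differentiable probability density path and v : [0,1] × ℝᵈ → ℝᵈ a differentiable time-dependent vector field satisfying the continuity equation ∂_t p_t(x) + div_x(p_t(x) v_t(x)) = 0 for all t and x. Let φ : [0,1] × ℝᵈ → ℝᵈ solve the flow ODE (d/dt) φ_t(x) = v_t(φ_t(x)) with φ₀(x) = x. Then for every x ∈ ℝᵈ and t ∈ [0,1], (d/dt) log p_t(φ_t(x)) = −div_x v_t(φ_t(x)) (the instantaneous change of variables formula). -/

import Mathlib

open Set

noncomputable section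

/-- The (spatial) divergence of a vector field on `ℝᵈ`: `div v x = ∑ i ∂vⁱ/∂xⁱ (x)`. -/
def divergence {d : ℕ} (v : EuclideanSpace ℝ (Fin d) → EuclideanSpace ℝ (Fin d))
    (x : EuclideanSpace ℝ (Fin d)) : ℝ :=
  ∑ i, fderiv ℝ v x (EuclideanSpace.single i 1) i

lemma clm_expand {d : ℕ} (f : EuclideanSpace ℝ (Fin d) →L[ℝ] ℝ)
    (w : EuclideanSpace ℝ (Fin d)) :
    f w = ∑ i, w i * f (EuclideanSpace.single i 1) := by
  have hw : w = ∑ i, w i • EuclideanSpace.single i (1:ℝ) := by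
    ext j
    rw [WithLp.ofLp_sum, Finset.sum_apply]
    simp [EuclideanSpace.single_apply]
  conv_lhs => rw [hw]
  simp [map_sum, map_smul, smul_eq_mul]

/-- **Instantaneous change of variables:** if `(p, v)` satisfies the continuity equation
and `φ` is the flow of `v` (with `φ₀ = id`), then along the flow the log-density satisfies
`(d/dt) log p_t(φ_t(x)) = −div v_t(φ_t(x))`. -/
theorem instantaneous_change_of_variables
    {d : ℕ} (hd : 1 ≤ d)
    (p : ℝ → EuclideanSpace ℝ (Fin d) → ℝ)
    (v : ℝ → EuclideanSpace ℝ (Fin d) → EuclideanSpace ℝ (Fin d))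
    (φ : ℝ → EuclideanSpace ℝ (Fin d) → EuclideanSpace ℝ (Fin d))
    -- `p` is a differentiable, everywhere-positive probability density path
    (hp_pos : ∀ t ∈ Icc (0:ℝ) 1, ∀ x, 0 < p t x)
    (hp_int : ∀ t ∈ Icc (0:ℝ) 1, ∫ x, p t x = 1)
    (hp_diff : Differentiable ℝ (Function.uncurry p))
    -- `v` is a differentiable time-dependent vector field
    (hv_diff : Differentiable ℝ (Function.uncurry v))
    -- the continuity equation
    (hcont : ∀ t ∈ Icc (0:ℝ) 1, ∀ x,
      deriv (fun s => p s x) t + divergence (fun y => p t y • v t y) x = 0)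
    -- `φ` is the flow of `v` starting at the identity
    (hφ0 : ∀ x, φ 0 x = x)
    (hφ : ∀ t ∈ Icc (0:ℝ) 1, ∀ x, HasDerivAt (fun s => φ s x) (v t (φ t x)) t) :
    ∀ x, ∀ t ∈ Icc (0:ℝ) 1,
      HasDerivAt (fun s => Real.log (p s (φ s x))) (-divergence (v t) (φ t x)) t := by
  intro x t ht
  set x' := φ t x with hx'
  have hpos : 0 < p t x' := hp_pos t ht x'
  set Dp := fderiv ℝ (Function.uncurry p) (t, x') with hDpdef
  set w := v t x' with hwdef
  -- derivative of s ↦ p s (φ s x)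
  have hF : HasDerivAt (fun s => ((s : ℝ), φ s x)) ((1 : ℝ), w) t :=
    (hasDerivAt_id t).prodMk (hφ t ht x)
  have hpc : HasDerivAt (fun s => p s (φ s x)) (Dp (1, w)) t :=
    ((hp_diff (t, x')).hasFDerivAt).comp_hasDerivAt (l := Function.uncurry p) (l' := Dp) t hF
  have hlog : HasDerivAt (fun s => Real.log (p s (φ s x)))
      (Dp (1, w) / p t x') t := hpc.log (ne_of_gt hpos)
  -- spatial derivatives
  have hginr : HasFDerivAt (fun y => ((t : ℝ), y))
      (ContinuousLinearMap.inr ℝ ℝ (EuclideanSpace ℝ (Fin d))) x' :=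
    hasFDerivAt_prodMk_right t x'
  set Dg := Dp.comp (ContinuousLinearMap.inr ℝ ℝ (EuclideanSpace ℝ (Fin d))) with hDgdef
  have hg : HasFDerivAt (fun y => p t y) Dg x' :=
    ((hp_diff (t, x')).hasFDerivAt).comp x' hginr
  set Dv := (fderiv ℝ (Function.uncurry v) (t, x')).comp
      (ContinuousLinearMap.inr ℝ ℝ (EuclideanSpace ℝ (Fin d))) with hDvdef
  have hv : HasFDerivAt (fun y => v t y) Dv x' :=
    ((hv_diff (t, x')).hasFDerivAt).comp x' hginr
  -- time derivative of p at fixed point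
  have htd : HasDerivAt (fun s => p s x') (Dp (1, 0)) t :=
    ((hp_diff (t, x')).hasFDerivAt).comp_hasDerivAt (l := Function.uncurry p) (l' := Dp) t
      ((hasDerivAt_id t).prodMk (hasDerivAt_const t x'))
  -- product rule
  have hprod : HasFDerivAt (fun y => p t y • v t y)
      (p t x' • Dv + Dg.smulRight (v t x')) x' := hg.smul hv
  -- divergence of p • v
  have hdivpv : divergence (fun y => p t y • v t y) x'
      = p t x' * divergence (v t) x' + ∑ i, Dg (EuclideanSpace.single i 1) * w i := by
    unfold divergence
    rw [hprod.fderiv]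
    have hvf : fderiv ℝ (v t) x' = Dv := hv.fderiv
    rw [hvf, Finset.mul_sum, ← Finset.sum_add_distrib]
    refine Finset.sum_congr rfl fun i _ => ?_
    simp [ContinuousLinearMap.add_apply, ContinuousLinearMap.smul_apply,
      ContinuousLinearMap.smulRight_apply, PiLp.add_apply, PiLp.smul_apply,
      smul_eq_mul, ← hwdef]
  -- decompose Dp (1, w)
  have hsplit : Dp (1, w) = Dp (1, 0) + Dg w := by
    have : ((1 : ℝ), w) = ((1 : ℝ), (0 : EuclideanSpace ℝ (Fin d))) + ((0 : ℝ), w) := by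
      simp
    rw [this, map_add]
    simp [hDgdef]
  have hDgw : Dg w = ∑ i, w i * Dg (EuclideanSpace.single i 1) := clm_expand Dg w
  have hderiv : deriv (fun s => p s x') t = Dp (1, 0) := htd.deriv
  have hc := hcont t ht x'
  rw [hderiv, hdivpv] at hc
  have key : Dp (1, w) / p t x' = -divergence (v t) x' := by
    rw [hsplit, hDgw]
    have hsum : ∑ i, w i * Dg (EuclideanSpace.single i 1)
        = ∑ i, Dg (EuclideanSpace.single i 1) * w i := by
      congr 1; ext i; ring
    rw [hsum]
    field_simp
    linarith
  rwa [key] at hlog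


end
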